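/- Let A, B ∈ M_n(ℂ) with Jordan–Chevalley decompositions A = S + N and B = S' + N' (S, S' diagonalizable; N, N' nilpotent; SN = NS and S'N' = N'S'). If exp(2πi·A) = exp(2πi·B), then exp(2πi·S) = exp(2πi·S') and N = N'. -/

import Mathlib

open Polynomial
open scoped Nat

section JCAux

variable {d : ℕ}

lemma commute_exp_exp_aux {X Y : Matrix (Fin d) (Fin d) ℂ} (h : Commute X Y) :
    Commute (NormedSpace.exp X) (NormedSpace.exp Y) := by
  rw [NormedSpace.exp_eq_tsum (𝕂 := ℂ)]
  exact Commute.tsum_left _ fun i => Commute.tsum_right _ fun j =>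
    ((h.pow_pow i j).smul_left _).smul_right _

lemma exp_eq_sum_of_pow_eq_zero_aux {m : ℕ} {X : Matrix (Fin d) (Fin d) ℂ} (h : X ^ m = 0) :
    NormedSpace.exp X = ∑ k ∈ Finset.range m, (k ! : ℂ)⁻¹ • X ^ k := by
  rw [NormedSpace.exp_eq_tsum (𝕂 := ℂ)]
  exact tsum_eq_sum fun k hk => by
    rw [pow_eq_zero_of_le (Nat.le_of_not_lt fun hlt => hk (Finset.mem_range.mpr hlt)) h,
      smul_zero]

lemma isNilpotent_exp_sub_one_aux {X : Matrix (Fin d) (Fin d) ℂ} (h : IsNilpotent X) :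
    IsNilpotent (NormedSpace.exp X - 1) := by
  obtain ⟨m, hm⟩ := h
  have h' : X ^ (m + 1) = 0 := by rw [pow_succ, hm, zero_mul]
  rw [exp_eq_sum_of_pow_eq_zero_aux h', Finset.sum_range_succ']
  simp only [pow_zero, Nat.factorial_zero, Nat.cast_one, inv_one, one_smul]
  rw [add_sub_cancel_right]
  have heq : (∑ k ∈ Finset.range m, ((k + 1)! : ℂ)⁻¹ • X ^ (k + 1)) =
      X * ∑ k ∈ Finset.range m, ((k + 1)! : ℂ)⁻¹ • X ^ k := by
    rw [Finset.mul_sum]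
    exact Finset.sum_congr rfl fun k _ => by rw [mul_smul_comm, pow_succ']
  rw [heq]
  have hcomm : Commute X (∑ k ∈ Finset.range m, ((k + 1)! : ℂ)⁻¹ • X ^ k) :=
    Commute.sum_right _ _ _ fun k _ => ((Commute.refl X).pow_right k).smul_right _
  exact hcomm.isNilpotent_mul_right ⟨m, hm⟩

lemma isDiagonalizable_isSemisimple_aux {A : Matrix (Fin d) (Fin d) ℂ}
    (h : ∃ P : Matrix (Fin d) (Fin d) ℂ, IsUnit P ∧ (P * A * P⁻¹).IsDiag) :
    Module.End.IsSemisimple (Matrix.toLinAlgEquiv' A) := by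
  obtain ⟨P, hP, hdiag⟩ := h
  have hdet := (Matrix.isUnit_iff_isUnit_det P).mp hP
  have hPP : P⁻¹ * P = 1 := Matrix.nonsing_inv_mul P hdet
  have hPP' : P * P⁻¹ = 1 := Matrix.mul_nonsing_inv P hdet
  set D := P * A * P⁻¹ with hD
  set p : ℂ[X] := ∏ μ ∈ Finset.image D.diag Finset.univ, (X - C μ) with hp
  have hsq : Squarefree p :=
    (separable_prod_X_sub_C_iff'.mpr fun x _ y _ hxy => hxy).squarefree
  have hD0 : Polynomial.aeval D p = 0 := by
    conv_lhs => rw [← hdiag.diagonal_diag]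
    have h1 : Matrix.diagonal D.diag = Matrix.diagonalAlgHom ℂ D.diag := rfl
    rw [h1, Polynomial.aeval_algHom_apply]
    have h2 : Polynomial.aeval D.diag p = 0 := by
      funext i
      have h3 : Polynomial.aeval D.diag p i = Polynomial.aeval (D.diag i) p :=
        (Polynomial.aeval_algHom_apply (Pi.evalAlgHom ℂ (fun _ => ℂ) i) D.diag p).symm
      rw [h3, Pi.zero_apply, hp]
      rw [map_prod]
      refine Finset.prod_eq_zero (Finset.mem_image_of_mem D.diag (Finset.mem_univ i)) ?_
      simp
    rw [h2, map_zero]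
  have hssD : Module.End.IsSemisimple (Matrix.toLinAlgEquiv' D) := by
    refine Module.End.isSemisimple_of_squarefree_aeval_eq_zero hsq ?_
    have hcoe : Matrix.toLinAlgEquiv' (R := ℂ) D = Matrix.toLinAlgEquiv'.toAlgHom D := rfl
    rw [hcoe, Polynomial.aeval_algHom_apply, hD0, map_zero]
  let e : (Fin d → ℂ) ≃ₗ[ℂ] (Fin d → ℂ) :=
    LinearEquiv.ofLinear (Matrix.toLinAlgEquiv' P) (Matrix.toLinAlgEquiv' P⁻¹)
      (by rw [← Module.End.mul_eq_comp, ← map_mul, hPP', map_one]; rfl)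
      (by rw [← Module.End.mul_eq_comp, ← map_mul, hPP, map_one]; rfl)
  have he : (e : (Fin d → ℂ) →ₗ[ℂ] (Fin d → ℂ)) ∘ₗ Matrix.toLinAlgEquiv' A =
      Matrix.toLinAlgEquiv' D ∘ₗ (e : (Fin d → ℂ) →ₗ[ℂ] (Fin d → ℂ)) := by
    ext v
    simp only [LinearMap.comp_apply, LinearEquiv.coe_coe, LinearEquiv.ofLinear_apply, e,
      Matrix.toLinAlgEquiv'_apply, Matrix.mulVec_mulVec]
    have : P * A = D * P := by
      rw [hD, Matrix.mul_assoc, Matrix.mul_assoc, hPP, Matrix.mul_one]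
    rw [this]
  exact (LinearEquiv.isSemisimple_iff _ _ e he).mpr hssD

lemma jc_unique_aux {s N s' N' : Module.End ℂ (Fin d → ℂ)}
    (hs : Module.End.IsSemisimple s) (hN : IsNilpotent N) (hc : s * N = N * s)
    (hs' : Module.End.IsSemisimple s') (hN' : IsNilpotent N') (hc' : s' * N' = N' * s')
    (h : s + N = s' + N') : s = s' ∧ N = N' := by
  obtain ⟨n₀, hn₀mem, s₀, hs₀mem, hn₀, hs₀, hf₀⟩ :=
    Module.End.exists_isNilpotent_isSemisimple (f := s + N)
  have key : ∀ t M : Module.End ℂ (Fin d → ℂ), Module.End.IsSemisimple t → IsNilpotent M →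
      t * M = M * t → t + M = s + N → t = s₀ ∧ M = n₀ := by
    intro t M ht hM htM htMf
    have hcomm_t_f : Commute t (s + N) := by
      rw [← htMf]; exact (Commute.refl t).add_right htM
    have hcomm_M_f : Commute M (s + N) := by
      rw [← htMf]; exact (Commute.symm htM).add_right (Commute.refl M)
    have h1 : Commute t s₀ :=
      Algebra.commute_of_mem_adjoin_singleton_of_commute hs₀mem hcomm_t_f
    have h2 : Commute M n₀ :=
      Algebra.commute_of_mem_adjoin_singleton_of_commute hn₀mem hcomm_M_f
    have hsub_ss : Module.End.IsSemisimple (t - s₀) :=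
      Module.End.IsSemisimple.sub_of_commute h1 ht hs₀
    have heq : t - s₀ = n₀ - M := by
      rw [sub_eq_sub_iff_add_eq_add, htMf, hf₀]
    have hsub_nil : IsNilpotent (t - s₀) := by
      rw [heq]; exact Commute.isNilpotent_sub h2.symm hn₀ hM
    have h0 : t - s₀ = 0 := Module.End.eq_zero_of_isNilpotent_isSemisimple hsub_nil hsub_ss
    have h0' : n₀ - M = 0 := heq ▸ h0
    exact ⟨sub_eq_zero.mp h0, (sub_eq_zero.mp h0').symm⟩
  obtain ⟨e1, e2⟩ := key s N hs hN hc rfl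
  obtain ⟨e1', e2'⟩ := key s' N' hs' hN' hc' h.symm
  exact ⟨e1.trans e1'.symm, e2.trans e2'.symm⟩

lemma nilpotent_exp_inj_aux {N N' : Matrix (Fin d) (Fin d) ℂ} {c : ℂ} (hc : c ≠ 0)
    (hN : IsNilpotent N) (hN' : IsNilpotent N')
    (h : NormedSpace.exp (c • N) = NormedSpace.exp (c • N')) : N = N' := by
  obtain ⟨m₁, h₁⟩ := hN
  obtain ⟨m₂, h₂⟩ := hN'
  set M := m₁ + m₂ + 2 with hM
  have hNM : N ^ M = 0 := pow_eq_zero_of_le (by omega) h₁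
  have hN'M : N' ^ M = 0 := pow_eq_zero_of_le (by omega) h₂
  have key : ∀ k : ℕ,
      ∑ j ∈ Finset.range M, (k : ℂ) ^ j • (((j ! : ℂ)⁻¹ * c ^ j) • N ^ j) =
      ∑ j ∈ Finset.range M, (k : ℂ) ^ j • (((j ! : ℂ)⁻¹ * c ^ j) • N' ^ j) := by
    intro k
    have expand : ∀ Y : Matrix (Fin d) (Fin d) ℂ, Y ^ M = 0 →
        NormedSpace.exp ((k : ℕ) • (c • Y)) =
          ∑ j ∈ Finset.range M, (k : ℂ) ^ j • (((j ! : ℂ)⁻¹ * c ^ j) • Y ^ j) := by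
      intro Y hY
      have h5 : (k : ℕ) • (c • Y) = ((k : ℂ) * c) • Y := by
        rw [← Nat.cast_smul_eq_nsmul ℂ, smul_smul]
      have h6 : (((k : ℂ) * c) • Y) ^ M = 0 := by
        rw [_root_.smul_pow, hY, smul_zero]
      rw [h5, exp_eq_sum_of_pow_eq_zero_aux h6]
      refine Finset.sum_congr rfl fun j _ => ?_
      rw [_root_.smul_pow, smul_smul, smul_smul]
      congr 1
      rw [mul_pow]
      ring
    have e1 : NormedSpace.exp ((k : ℕ) • (c • N)) = NormedSpace.exp ((k : ℕ) • (c • N')) := by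
      rw [Matrix.exp_nsmul, Matrix.exp_nsmul, h]
    rw [expand N hNM, expand N' hN'M] at e1
    exact e1
  ext a b
  set p : ℂ[X] := ∑ j ∈ Finset.range M,
      C ((j ! : ℂ)⁻¹ * c ^ j * ((N ^ j) a b - (N' ^ j) a b)) * X ^ j with hp
  have hroot : ∀ k : ℕ, p.eval (k : ℂ) = 0 := by
    intro k
    have hk := congrFun (congrFun (key k) a) b
    simp only [Finset.sum_apply, Matrix.sum_apply, Matrix.smul_apply, smul_eq_mul] at hk
    rw [hp, Polynomial.eval_finset_sum]
    simp only [eval_mul, eval_C, eval_pow, eval_X]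
    have hsplit : ∑ j ∈ Finset.range M,
        (j ! : ℂ)⁻¹ * c ^ j * ((N ^ j) a b - (N' ^ j) a b) * (k : ℂ) ^ j =
        (∑ j ∈ Finset.range M, (k : ℂ) ^ j * ((j ! : ℂ)⁻¹ * c ^ j * (N ^ j) a b)) -
        (∑ j ∈ Finset.range M, (k : ℂ) ^ j * ((j ! : ℂ)⁻¹ * c ^ j * (N' ^ j) a b)) := by
      rw [← Finset.sum_sub_distrib]
      exact Finset.sum_congr rfl fun j _ => by ring
    rw [hsplit, sub_eq_zero]
    exact hk
  have hp0 : p = 0 := by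
    refine Polynomial.eq_zero_of_infinite_isRoot p ?_
    refine Set.Infinite.mono ?_ (Set.infinite_range_of_injective (Nat.cast_injective (R := ℂ)))
    rintro x ⟨k, rfl⟩
    exact hroot k
  have hcoeff := congrArg (fun q : ℂ[X] => q.coeff 1) hp0
  simp only [hp, Polynomial.finset_sum_coeff, Polynomial.coeff_C_mul, Polynomial.coeff_X_pow,
    Polynomial.coeff_zero, mul_ite, mul_one, mul_zero, Finset.sum_ite_eq] at hcoeff
  have h1M : (1 : ℕ) ∈ Finset.range M := Finset.mem_range.mpr (by omega)
  rw [if_pos h1M] at hcoeff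
  simp only [Nat.factorial_one, Nat.cast_one, inv_one, pow_one, one_mul] at hcoeff
  rcases mul_eq_zero.mp hcoeff with h' | h'
  · exact absurd h' hc
  · exact sub_eq_zero.mp h'

end JCAux

/-- A complex square matrix is diagonalizable (semisimple) if it is conjugate to a
diagonal matrix. -/
def Matrix.IsDiagonalizable {n : ℕ} (A : Matrix (Fin n) (Fin n) ℂ) : Prop :=
  ∃ P : Matrix (Fin n) (Fin n) ℂ, IsUnit P ∧ (P * A * P⁻¹).IsDiag

/-- If `A = S + N` and `B = S' + N'` are Jordan–Chevalley decompositions and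
`exp(2πi A) = exp(2πi B)`, then `exp(2πi S) = exp(2πi S')` and `N = N'`. -/
theorem exp_semisimple_eq_and_nilpotent_eq_of_exp_eq {n : ℕ}
    (A B S N S' N' : Matrix (Fin n) (Fin n) ℂ)
    (hA : A = S + N) (hS : S.IsDiagonalizable) (hN : IsNilpotent N)
    (hSN : S * N = N * S)
    (hB : B = S' + N') (hS' : S'.IsDiagonalizable) (hN' : IsNilpotent N')
    (hSN' : S' * N' = N' * S')
    (h : NormedSpace.exp ((2 * (Real.pi : ℂ) * Complex.I) • A) =
      NormedSpace.exp ((2 * (Real.pi : ℂ) * Complex.I) • B)) :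
    NormedSpace.exp ((2 * (Real.pi : ℂ) * Complex.I) • S) =
        NormedSpace.exp ((2 * (Real.pi : ℂ) * Complex.I) • S') ∧
      N = N' := by
  set c : ℂ := 2 * (Real.pi : ℂ) * Complex.I with hcdef
  have hc0 : c ≠ 0 := by
    simp only [hcdef, mul_ne_zero_iff]
    refine ⟨⟨two_ne_zero, ?_⟩, Complex.I_ne_zero⟩
    exact_mod_cast Complex.ofReal_ne_zero.mpr Real.pi_ne_zero
  -- the four pieces
  set D := NormedSpace.exp (c • S) with hDdef
  set D' := NormedSpace.exp (c • S') with hD'def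
  set E := NormedSpace.exp (c • N) with hEdef
  set E' := NormedSpace.exp (c • N') with hE'def
  -- commutation
  have hcSN : Commute (c • S) (c • N) := by
    have : Commute S N := hSN
    exact (this.smul_left c).smul_right c
  have hcSN' : Commute (c • S') (c • N') := by
    have : Commute S' N' := hSN'
    exact (this.smul_left c).smul_right c
  have hDE : Commute D E := commute_exp_exp_aux hcSN
  have hDE' : Commute D' E' := commute_exp_exp_aux hcSN'
  have hDE1 : Commute D (E - 1) := hDE.sub_right (Commute.one_right D)
  have hDE1' : Commute D' (E' - 1) := hDE'.sub_right (Commute.one_right D')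
  -- additive JC decomposition of the exponentials
  have hXA : NormedSpace.exp (c • A) = D + D * (E - 1) := by
    rw [hA, smul_add, Matrix.exp_add_of_commute _ _ hcSN, ← hDdef, ← hEdef,
      mul_sub, mul_one, add_sub_cancel]
  have hXB : NormedSpace.exp (c • B) = D' + D' * (E' - 1) := by
    rw [hB, smul_add, Matrix.exp_add_of_commute _ _ hcSN', ← hD'def, ← hE'def,
      mul_sub, mul_one, add_sub_cancel]
  -- nilpotency
  have hE1nil : IsNilpotent (E - 1) := isNilpotent_exp_sub_one_aux (hN.smul c)
  have hE1nil' : IsNilpotent (E' - 1) := isNilpotent_exp_sub_one_aux (hN'.smul c)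
  have hMnil : IsNilpotent (D * (E - 1)) := hDE1.isNilpotent_mul_left hE1nil
  have hMnil' : IsNilpotent (D' * (E' - 1)) := hDE1'.isNilpotent_mul_left hE1nil'
  -- diagonalizability of D, D'
  have hDdiag : ∀ T : Matrix (Fin n) (Fin n) ℂ, T.IsDiagonalizable →
      ∃ P : Matrix (Fin n) (Fin n) ℂ, IsUnit P ∧
        (P * NormedSpace.exp (c • T) * P⁻¹).IsDiag := by
    intro T hT
    obtain ⟨P, hP, hd⟩ := hT
    refine ⟨P, hP, ?_⟩
    have h1 : P * NormedSpace.exp (c • T) * P⁻¹ =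
        NormedSpace.exp (P * (c • T) * P⁻¹) := (Matrix.exp_conj P (c • T) hP).symm
    have h2 : P * (c • T) * P⁻¹ = c • (P * T * P⁻¹) := by
      rw [Matrix.mul_smul, Matrix.smul_mul]
    rw [h1, h2, ← hd.diagonal_diag, ← Matrix.diagonal_smul, Matrix.exp_diagonal]
    exact Matrix.isDiag_diagonal _
  have hssD : Module.End.IsSemisimple (Matrix.toLinAlgEquiv' D) :=
    isDiagonalizable_isSemisimple_aux (hDdiag S hS)
  have hssD' : Module.End.IsSemisimple (Matrix.toLinAlgEquiv' D') :=
    isDiagonalizable_isSemisimple_aux (hDdiag S' hS')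
  -- transfer to endomorphisms and apply uniqueness
  set ψ := (Matrix.toLinAlgEquiv' : Matrix (Fin n) (Fin n) ℂ ≃ₐ[ℂ] _) with hψ
  have hsum : ψ D + ψ (D * (E - 1)) = ψ D' + ψ (D' * (E' - 1)) := by
    rw [← map_add, ← map_add, ← hXA, ← hXB]
    exact congrArg ψ h
  have hcomm1 : ψ D * ψ (D * (E - 1)) = ψ (D * (E - 1)) * ψ D := by
    rw [← map_mul, ← map_mul]
    exact congrArg ψ ((Commute.refl D).mul_right hDE1).eq
  have hcomm1' : ψ D' * ψ (D' * (E' - 1)) = ψ (D' * (E' - 1)) * ψ D' := by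
    rw [← map_mul, ← map_mul]
    exact congrArg ψ ((Commute.refl D').mul_right hDE1').eq
  have hnil1 : IsNilpotent (ψ (D * (E - 1))) := hMnil.map ψ
  have hnil1' : IsNilpotent (ψ (D' * (E' - 1))) := hMnil'.map ψ
  obtain ⟨hDeq, hMeq⟩ := jc_unique_aux hssD hnil1 hcomm1 hssD' hnil1' hcomm1' hsum
  have hDD' : D = D' := ψ.injective hDeq
  have hMM' : D * (E - 1) = D' * (E' - 1) := ψ.injective hMeq
  refine ⟨hDD', ?_⟩
  -- cancel the invertible D to get E = E'
  have hDunit : IsUnit D := by rw [hDdef]; exact Matrix.isUnit_exp _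
  have hEE' : E = E' := by
    rw [← hDD'] at hMM'
    have := hDunit.mul_left_cancel hMM'
    exact sub_left_injective this
  exact nilpotent_exp_inj_aux hc0 hN hN' (hEdef ▸ hE'def ▸ hEE')
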